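/- Let F_q be a finite field, m a prime with q primitive mod m, s > 1 dividing m − 1, and r of order s modulo m. If a_1 ∈ R_m = F_q[x]/(x^m−1) satisfies a_1·μ_r(a_1)·⋯·μ_r^{s−1}(a_1) = 1, and a_j := a_1·μ_r(a_1)·⋯·μ_r^{j−1}(a_1) for 2 ≤ j ≤ s−1, then the R_m-submodule of R_m^s generated by (1, a_1, …, a_{s−1}) is invariant under the map (f_1, …, f_s) ↦ (μ_r(f_s), μ_r(f_1), …, μ_r(f_{s−1})). -/

import Mathlib

set_option synthInstance.maxHeartbeats 1000000
set_option maxHeartbeats 1000000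

open Polynomial

/-- The multiplier map `μ_r : f(x) ↦ f(x^r)` on `R_m = F[x]/(x^m - 1)`, defined by lifting
the evaluation at `x^r`. -/
noncomputable def muR (F : Type*) [Field F] (m r : ℕ) :
    (Polynomial F ⧸ Ideal.span {(X : Polynomial F) ^ m - 1}) →ₐ[F]
    (Polynomial F ⧸ Ideal.span {(X : Polynomial F) ^ m - 1}) :=
  Ideal.Quotient.liftₐ _
    (Polynomial.aeval ((Ideal.Quotient.mk (Ideal.span {(X : Polynomial F) ^ m - 1}) X) ^ r))
    (by
      intro a ha
      obtain ⟨c, rfl⟩ := (Ideal.mem_span_singleton.mp ha)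
      have hX : (Ideal.Quotient.mk (Ideal.span {(X : Polynomial F) ^ m - 1}) X) ^ m = 1 := by
        rw [← map_pow, ← map_one (Ideal.Quotient.mk (Ideal.span {(X : Polynomial F) ^ m - 1}))]
        rw [Ideal.Quotient.eq]
        exact Ideal.mem_span_singleton_self _
      simp only [map_mul, map_sub, map_pow, map_one, Polynomial.aeval_X]
      rw [← pow_mul, mul_comm r m, pow_mul, hX, one_pow, sub_self, zero_mul])

/-- Lemma 1 (ideal): if `a_1 μ_r(a_1) ⋯ μ_r^{s-1}(a_1) = 1` and
`a_j = a_1 μ_r(a_1) ⋯ μ_r^{j-1}(a_1)`, then the `R_m`-submodule of `R_m^s` generated by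
`(1, a_1, …, a_{s-1})` is invariant under
`(f_1, …, f_s) ↦ (μ_r(f_s), μ_r(f_1), …, μ_r(f_{s-1}))`. -/
theorem circulant_metacyclic_invariant (F : Type*) [Field F] [Fintype F] (m s r : ℕ)
    [hm : Fact m.Prime] [hsz : NeZero s] (hdvdq : ¬ m ∣ Fintype.card F)
    (hprim : orderOf ((Fintype.card F : ZMod m)) = m - 1)
    (hs1 : 1 < s) (hsm : s ∣ m - 1) (hr : orderOf ((r : ZMod m)) = s)
    (a1 : Polynomial F ⧸ Ideal.span {(X : Polynomial F) ^ m - 1})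
    (ha1 : (∏ i ∈ Finset.range s, (⇑(muR F m r))^[i] a1) = 1) :
    ∀ w ∈ Submodule.span (Polynomial F ⧸ Ideal.span {(X : Polynomial F) ^ m - 1})
        {(fun j : Fin s => ∏ i ∈ Finset.range (j : ℕ), (⇑(muR F m r))^[i] a1)},
      (fun j : Fin s => muR F m r (w (j - 1))) ∈
        Submodule.span (Polynomial F ⧸ Ideal.span {(X : Polynomial F) ^ m - 1})
          {(fun j : Fin s => ∏ i ∈ Finset.range (j : ℕ), (⇑(muR F m r))^[i] a1)} := by
  classical
  set μ := muR F m r with hμ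
  set v : Fin s → (Polynomial F ⧸ Ideal.span {(X : Polynomial F) ^ m - 1}) :=
    fun j : Fin s => ∏ i ∈ Finset.range (j : ℕ), (⇑μ)^[i] a1 with hv
  set b := ∏ i ∈ Finset.Ico 1 s, (⇑μ)^[i] a1 with hb
  have hspos : 0 < s := Nat.pos_of_ne_zero (NeZero.ne s)
  have hab : a1 * b = 1 := by
    rw [← ha1, Finset.range_eq_Ico, Finset.prod_eq_prod_Ico_succ_bot hspos]
    simp [hb]
  have hkey : ∀ j : Fin s, μ (v (j - 1)) = b * v j := by
    intro j
    obtain ⟨s', hs'⟩ : ∃ s', s = s' + 1 := ⟨s - 1, by omega⟩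
    subst hs'
    rcases eq_or_ne j 0 with rfl | hj
    · have h0 : ((0 - 1 : Fin (s' + 1)) : ℕ) = s' + 1 - 1 := by
        simp [Fin.coe_sub_one]
      simp only [hv, h0, Fin.val_zero, Finset.range_zero, Finset.prod_empty, mul_one]
      rw [map_prod, hb, Finset.prod_Ico_eq_prod_range]
      apply Finset.prod_congr rfl
      intro i _
      rw [Nat.add_comm 1 i, Function.iterate_succ_apply']
    · have h1 : ((j - 1 : Fin (s' + 1)) : ℕ) = (j : ℕ) - 1 := by
        rw [Fin.coe_sub_one, if_neg hj]
      have hjpos : 0 < (j : ℕ) := Nat.pos_of_ne_zero (by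
        exact fun h => hj (Fin.ext (by rw [h]; simp)))
      simp only [hv, h1]
      rw [map_prod]
      have hL : (∏ i ∈ Finset.range ((j : ℕ) - 1), μ ((⇑μ)^[i] a1))
          = ∏ i ∈ Finset.Ico 1 (j : ℕ), (⇑μ)^[i] a1 := by
        rw [Finset.prod_Ico_eq_prod_range]
        apply Finset.prod_congr rfl
        intro i _
        rw [Nat.add_comm 1 i, Function.iterate_succ_apply']
      rw [hL, Finset.range_eq_Ico, Finset.prod_eq_prod_Ico_succ_bot hjpos,
        Function.iterate_zero_apply, ← mul_assoc, mul_comm b a1, hab, one_mul]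
  intro w hw
  rw [Submodule.mem_span_singleton] at hw ⊢
  obtain ⟨c, rfl⟩ := hw
  refine ⟨μ c * b, funext fun j => ?_⟩
  simp only [Pi.smul_apply, smul_eq_mul, map_mul, hkey j]
  ring
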